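/- For each j ∈ {1,…,n}, set ℓ_j := max(-Δ, x_{L,j}), u_j := min(Δ, x_{R,j}), and define Γ_j : (ℓ_j, u_j) → ℝ by Γ_j(x) := -log(x - x_{L,j}) - log(x_{R,j} - x) - log(Δ + x) - log(Δ - x); let δ := min_j (u_j - ℓ_j) > 0 and ε := min{ (δ·Δ/(2048·√n))², 1/36 }. Suppose x ∈ Ω is a vector whose components x_j ∈ (ℓ_j, u_j) satisfy Γ_j(x_j) - min Γ_j ≤ ε for every j. Then ‖∇Γ̂(x)‖₂ ≤ Δ/64. -/

import Mathlib

open Real Set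

private lemma hasDerivAt_barrier (a b Δ t : ℝ) (h1 : 0 < t - a) (h2 : 0 < b - t)
    (h3 : 0 < Δ + t) (h4 : 0 < Δ - t) :
    HasDerivAt (fun s => -Real.log (s - a) - Real.log (b - s) - Real.log (Δ + s) - Real.log (Δ - s))
      (1/(b-t) + 1/(Δ-t) - 1/(t-a) - 1/(Δ+t)) t := by
  have d1 : HasDerivAt (fun s : ℝ => s - a) 1 t := (hasDerivAt_id t).sub_const a
  have d2 : HasDerivAt (fun s : ℝ => b - s) (-1) t := (hasDerivAt_id t).const_sub b
  have d3 : HasDerivAt (fun s : ℝ => Δ + s) 1 t := (hasDerivAt_id t).const_add Δ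
  have d4 : HasDerivAt (fun s : ℝ => Δ - s) (-1) t := (hasDerivAt_id t).const_sub Δ
  have l1 := d1.log h1.ne'
  have l2 := d2.log h2.ne'
  have l3 := d3.log h3.ne'
  have l4 := d4.log h4.ne'
  have := ((l1.neg.sub l2).sub l3).sub l4
  refine this.congr_deriv ?_
  ring

private lemma key13_sq (d w z v ε : ℝ) (h : d/2*(d/2) ≤ ε*(w*z)) (hwv : w ≤ v) (hzv : z ≤ v)
    (hw : 0 ≤ w) (hz : 0 ≤ z) (hv : 0 < v) (hε : 0 ≤ ε) : d^2 ≤ 4*ε*v^2 := by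
  nlinarith [mul_nonneg hε (mul_nonneg (by linarith : (0:ℝ) ≤ v - w) hz),
    mul_nonneg hε (mul_nonneg (by linarith : (0:ℝ) ≤ v - z) hv.le)]

private lemma key13_pos (d w ε : ℝ) (h : d/2*(d/2) ≤ ε*w) (hd : 0 < d) (hw : 0 < w) :
    0 < ε := by nlinarith [mul_pos hd hd]

private lemma key13_sqrt (d v ε : ℝ) (hd : 0 < d) (hv : 0 < v) (hε : 0 ≤ ε)
    (h : d^2 ≤ 4*ε*v^2) : d ≤ 2*Real.sqrt ε*v := by
  have h4 : 4*ε*v^2 = (2*Real.sqrt ε*v)^2 := by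
    rw [mul_pow, mul_pow, Real.sq_sqrt hε]; ring
  calc d = Real.sqrt (d^2) := (Real.sqrt_sq hd.le).symm
    _ ≤ Real.sqrt ((2*Real.sqrt ε*v)^2) := Real.sqrt_le_sqrt (h4 ▸ h)
    _ = 2*Real.sqrt ε*v := Real.sqrt_sq (by positivity)

private lemma key13_s6 (ε : ℝ) (hε0 : 0 ≤ ε) (hε36 : ε ≤ 1/36) : Real.sqrt ε ≤ 1/6 := by
  have hs := Real.sqrt_nonneg ε
  have hs2 : Real.sqrt ε^2 = ε := Real.sq_sqrt hε0
  nlinarith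

private lemma key13_endgame (al be A B d s : ℝ)
    (hal : 0 < al) (hbe : 0 < be) (hA : A = al + d) (hB : B = be - d) (hd : 0 < d)
    (hs : 0 < s) (hba1 : be ≤ 2*al) (hba2 : al ≤ 2*be) (hs6 : s ≤ 1/6)
    (hd2b : d ≤ 2*s*be) (hd2A : d ≤ 2*s*A) :
    2*d/(B*be) + 2*d/(A*al) ≤ 32*s/(al+be) := by
  have hd3 : d ≤ be/3 := by nlinarith [mul_le_mul_of_nonneg_right hs6 hbe.le]
  have hBpos : 0 < B := by rw [hB]; linarith
  have hApos : 0 < A := by rw [hA]; linarith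
  have hT1 : 2*d/(B*be) ≤ 6*s/be := by
    rw [div_le_div_iff₀ (by positivity) hbe]
    nlinarith [mul_nonneg (mul_nonneg hs.le hbe.le) (by linarith : (0:ℝ) ≤ 3*B - 2*be),
      mul_nonneg hbe.le (by linarith : (0:ℝ) ≤ 2*s*be - d)]
  have hT2 : 2*d/(A*al) ≤ 4*s/al := by
    rw [div_le_div_iff₀ (by positivity) hal]
    nlinarith [mul_nonneg hal.le (by linarith : (0:ℝ) ≤ 2*s*A - d)]
  have hT3 : 6*s/be + 4*s/al ≤ 32*s/(al+be) := by
    rw [div_add_div _ _ hbe.ne' hal.ne', div_le_div_iff₀ (by positivity) (by linarith)]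
    nlinarith [mul_nonneg hs.le (mul_nonneg (by linarith : (0:ℝ) ≤ 2*al - be)
      (by linarith : (0:ℝ) ≤ 2*be - al))]
  linarith

set_option maxHeartbeats 1000000 in
private lemma key13 (a b Δ ℓ u m x ε : ℝ) (f : ℝ → ℝ)
    (hf : ∀ t, f t = -Real.log (t - a) - Real.log (b - t) - Real.log (Δ + t) - Real.log (Δ - t))
    (hℓ : ℓ = max (-Δ) a) (hu : u = min Δ b)
    (hmI : m ∈ Set.Ioo ℓ u) (hmin : IsMinOn f (Set.Ioo ℓ u) m)
    (hxI : x ∈ Set.Ioo ℓ u) (hmx : m ≤ x)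
    (hgap : f x - f m ≤ ε) (hε0 : 0 ≤ ε) (hε36 : ε ≤ 1/36) :
    0 ≤ 1/(b-x) + 1/(Δ-x) - 1/(x-a) - 1/(Δ+x) ∧
    1/(b-x) + 1/(Δ-x) - 1/(x-a) - 1/(Δ+x) ≤ 32 * Real.sqrt ε / (u - ℓ) := by
  have hfe : f = fun t => -Real.log (t - a) - Real.log (b - t) - Real.log (Δ + t) - Real.log (Δ - t) :=
    funext hf
  subst hfe
  have haℓ : a ≤ ℓ := hℓ ▸ le_max_right _ _
  have hΔℓ : -Δ ≤ ℓ := hℓ ▸ le_max_left _ _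
  have hub : u ≤ b := hu ▸ min_le_right _ _
  have huΔ : u ≤ Δ := hu ▸ min_le_left _ _
  have pos : ∀ t ∈ Set.Ioo ℓ u, 0 < t - a ∧ 0 < b - t ∧ 0 < Δ + t ∧ 0 < Δ - t := by
    intro t ht
    obtain ⟨h1, h2⟩ := ht
    exact ⟨by linarith, by linarith, by linarith, by linarith⟩
  have hder : ∀ t ∈ Set.Ioo ℓ u, HasDerivAt
      (fun s => -Real.log (s - a) - Real.log (b - s) - Real.log (Δ + s) - Real.log (Δ - s))
      (1/(b-t) + 1/(Δ-t) - 1/(t-a) - 1/(Δ+t)) t := by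
    intro t ht
    obtain ⟨p1, p2, p3, p4⟩ := pos t ht
    exact hasDerivAt_barrier a b Δ t p1 p2 p3 p4
  obtain ⟨pm1, pm2, pm3, pm4⟩ := pos m hmI
  obtain ⟨px1, px2, px3, px4⟩ := pos x hxI
  have hml : 0 < m - ℓ := by simp only [Set.mem_Ioo] at hmI; linarith [hmI.1]
  have hum : 0 < u - m := by simp only [Set.mem_Ioo] at hmI; linarith [hmI.2]
  have hxl : 0 < x - ℓ := by simp only [Set.mem_Ioo] at hxI; linarith [hxI.1]
  have hux : 0 < u - x := by simp only [Set.mem_Ioo] at hxI; linarith [hxI.2]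
  -- stationarity
  have h0 : 1/(b-m) + 1/(Δ-m) - 1/(m-a) - 1/(Δ+m) = 0 :=
    (hmin.isLocalMin (Ioo_mem_nhds hmI.1 hmI.2)).hasDerivAt_eq_zero (hder m hmI)
  -- monotonicity of the derivative expression
  have mono : ∀ p q, p ∈ Set.Ioo ℓ u → q ∈ Set.Ioo ℓ u → p ≤ q →
      1/(b-p) + 1/(Δ-p) - 1/(p-a) - 1/(Δ+p) ≤ 1/(b-q) + 1/(Δ-q) - 1/(q-a) - 1/(Δ+q) := by
    intro p q hp hq hpq
    obtain ⟨q1, q2, q3, q4⟩ := pos q hq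
    obtain ⟨p1, p2, p3, p4⟩ := pos p hp
    have m1 := one_div_le_one_div_of_le q2 (by linarith : b - q ≤ b - p)
    have m2 := one_div_le_one_div_of_le q4 (by linarith : Δ - q ≤ Δ - p)
    have m3 := one_div_le_one_div_of_le p1 (by linarith : p - a ≤ q - a)
    have m4 := one_div_le_one_div_of_le p3 (by linarith : Δ + p ≤ Δ + q)
    linarith
  -- second conclusion first
  have hFx0 : 0 ≤ 1/(b-x) + 1/(Δ-x) - 1/(x-a) - 1/(Δ+x) := by
    have := mono m x hmI hxI hmx
    linarith
  refine ⟨hFx0, ?_⟩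
  -- interval balance
  have hinvL : 1/(m-ℓ) ≤ 1/(m-a) + 1/(Δ+m) := by
    rcases max_choice (-Δ) a with h | h
    · have e : m - ℓ = Δ + m := by rw [hℓ, h]; ring
      have : 0 < 1/(m-a) := by positivity
      rw [e]; linarith
    · have e : m - ℓ = m - a := by rw [hℓ, h]
      have : 0 < 1/(Δ+m) := by positivity
      rw [e]; linarith
  have hinvR : 1/(u-m) ≤ 1/(b-m) + 1/(Δ-m) := by
    rcases min_choice Δ b with h | h
    · have e : u - m = Δ - m := by rw [hu, h]
      have : 0 < 1/(b-m) := by positivity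
      rw [e]; linarith
    · have e : u - m = b - m := by rw [hu, h]
      have : 0 < 1/(Δ-m) := by positivity
      rw [e]; linarith
  have hinvL2 : 1/(m-a) + 1/(Δ+m) ≤ 2/(m-ℓ) := by
    have m1 := one_div_le_one_div_of_le hml (by linarith : m - ℓ ≤ m - a)
    have m2 := one_div_le_one_div_of_le hml (by linarith : m - ℓ ≤ Δ + m)
    have : 2/(m-ℓ) = 1/(m-ℓ) + 1/(m-ℓ) := by ring
    linarith
  have hinvR2 : 1/(b-m) + 1/(Δ-m) ≤ 2/(u-m) := by
    have m1 := one_div_le_one_div_of_le hum (by linarith : u - m ≤ b - m)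
    have m2 := one_div_le_one_div_of_le hum (by linarith : u - m ≤ Δ - m)
    have : 2/(u-m) = 1/(u-m) + 1/(u-m) := by ring
    linarith
  have hba1 : u - m ≤ 2*(m-ℓ) := by
    have h1 : 1/(m-ℓ) ≤ 2/(u-m) := by linarith
    rw [div_le_div_iff₀ hml hum] at h1
    linarith
  have hba2 : m - ℓ ≤ 2*(u-m) := by
    have h1 : 1/(u-m) ≤ 2/(m-ℓ) := by linarith
    rw [div_le_div_iff₀ hum hml] at h1
    linarith
  -- trivial case x = m
  have hlu : 0 < u - ℓ := by linarith
  rcases eq_or_lt_of_le hmx with heq | hd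
  · subst heq
    have : (0:ℝ) ≤ 32 * Real.sqrt ε / (u - ℓ) := by positivity
    linarith [h0]
  -- main case m < x
  set c : ℝ := (m + x)/2 with hc
  have hcm : c - m = (x - m)/2 := by rw [hc]; ring
  have hxc : x - c = (x - m)/2 := by rw [hc]; ring
  have hxc0 : 0 < x - c := by rw [hxc]; linarith
  have hcm0 : 0 < c - m := by rw [hcm]; linarith
  have hcI : c ∈ Set.Ioo ℓ u := by
    simp only [Set.mem_Ioo] at hmI hxI ⊢
    rw [hc]
    exact ⟨by linarith [hmI.1, hxI.1], by linarith [hmI.2, hxI.2]⟩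
  obtain ⟨pc1, pc2, pc3, pc4⟩ := pos c hcI
  have hcl : 0 < c - ℓ := by simp only [Set.mem_Ioo] at hcI; linarith [hcI.1]
  have huc : 0 < u - c := by simp only [Set.mem_Ioo] at hcI; linarith [hcI.2]
  -- mean value theorem on [c, x]
  have hcxlt : c < x := by linarith
  have hsub : Set.Ioo c x ⊆ Set.Ioo ℓ u := by
    intro t ht
    simp only [Set.mem_Ioo] at ht ⊢
    simp only [Set.mem_Ioo] at hcI hxI
    exact ⟨by linarith [ht.1, hcI.1], by linarith [ht.2, hxI.2]⟩
  have hcont : ContinuousOn (fun t => -Real.log (t - a) - Real.log (b - t) - Real.log (Δ + t) - Real.log (Δ - t)) (Set.Icc c x) := by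
    intro t ht
    have htI : t ∈ Set.Ioo ℓ u := by
      simp only [Set.mem_Icc] at ht
      simp only [Set.mem_Ioo] at hcI hxI ⊢
      exact ⟨by linarith [ht.1, hcI.1], by linarith [ht.2, hxI.2]⟩
    exact (hder t htI).continuousAt.continuousWithinAt
  obtain ⟨z, hzI, hzs⟩ := exists_hasDerivAt_eq_slope
    (fun t => -Real.log (t - a) - Real.log (b - t) - Real.log (Δ + t) - Real.log (Δ - t))
    (fun t => 1/(b-t) + 1/(Δ-t) - 1/(t-a) - 1/(Δ+t)) hcxlt hcont
    (fun t ht => hder t (hsub ht))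
  have hzIo : z ∈ Set.Ioo ℓ u := hsub hzI
  have hfcm : (fun t => -Real.log (t - a) - Real.log (b - t) - Real.log (Δ + t) - Real.log (Δ - t)) m ≤
      (fun t => -Real.log (t - a) - Real.log (b - t) - Real.log (Δ + t) - Real.log (Δ - t)) c :=
    isMinOn_iff.mp hmin c hcI
  rw [eq_div_iff hxc0.ne'] at hzs
  have hFzc := mono c z hcI hzIo (le_of_lt hzI.1)
  -- key energy inequality
  have hεFc : (1/(b-c) + 1/(Δ-c) - 1/(c-a) - 1/(Δ+c)) * (x - c) ≤ ε := by
    have h1 : (1/(b-c) + 1/(Δ-c) - 1/(c-a) - 1/(Δ+c)) * (x - c) ≤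
        (1/(b-z) + 1/(Δ-z) - 1/(z-a) - 1/(Δ+z)) * (x - c) :=
      mul_le_mul_of_nonneg_right hFzc hxc0.le
    simp only at hzs hfcm hgap
    linarith [h1, hzs, hfcm, hgap]
  -- lower bounds for F c
  have hbr1 : 0 ≤ 1/(u-c) - 1/(u-m) := by
    have := one_div_le_one_div_of_le huc (by linarith : u - c ≤ u - m)
    linarith
  have hbr2 : 0 ≤ 1/(m-ℓ) - 1/(c-ℓ) := by
    have := one_div_le_one_div_of_le hml (by linarith : m - ℓ ≤ c - ℓ)
    linarith
  have hRb : 1/(u-c) - 1/(u-m) ≤ (1/(b-c) - 1/(b-m)) + (1/(Δ-c) - 1/(Δ-m)) := by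
    rcases min_choice Δ b with h | h
    · have e1 : u - c = Δ - c := by rw [hu, h]
      have e2 : u - m = Δ - m := by rw [hu, h]
      have hb0 : 0 ≤ 1/(b-c) - 1/(b-m) := by
        have := one_div_le_one_div_of_le pc2 (by linarith : b - c ≤ b - m)
        linarith
      rw [e1, e2]; linarith
    · have e1 : u - c = b - c := by rw [hu, h]
      have e2 : u - m = b - m := by rw [hu, h]
      have hb0 : 0 ≤ 1/(Δ-c) - 1/(Δ-m) := by
        have := one_div_le_one_div_of_le pc4 (by linarith : Δ - c ≤ Δ - m)
        linarith
      rw [e1, e2]; linarith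
  have hLb : 1/(m-ℓ) - 1/(c-ℓ) ≤ (1/(m-a) - 1/(c-a)) + (1/(Δ+m) - 1/(Δ+c)) := by
    rcases max_choice (-Δ) a with h | h
    · have e1 : m - ℓ = Δ + m := by rw [hℓ, h]; ring
      have e2 : c - ℓ = Δ + c := by rw [hℓ, h]; ring
      have hb0 : 0 ≤ 1/(m-a) - 1/(c-a) := by
        have := one_div_le_one_div_of_le pm1 (by linarith : m - a ≤ c - a)
        linarith
      rw [e1, e2]; linarith
    · have e1 : m - ℓ = m - a := by rw [hℓ, h]
      have e2 : c - ℓ = c - a := by rw [hℓ, h]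
      have hb0 : 0 ≤ 1/(Δ+m) - 1/(Δ+c) := by
        have := one_div_le_one_div_of_le pm3 (by linarith : Δ + m ≤ Δ + c)
        linarith
      rw [e1, e2]; linarith
  have hFclb : (1/(u-c) - 1/(u-m)) + (1/(m-ℓ) - 1/(c-ℓ)) ≤
      1/(b-c) + 1/(Δ-c) - 1/(c-a) - 1/(Δ+c) := by linarith [hRb, hLb, h0]
  have hFclb1 : 1/(u-c) - 1/(u-m) ≤ 1/(b-c) + 1/(Δ-c) - 1/(c-a) - 1/(Δ+c) := by
    linarith [hRb, hLb, h0, hbr2]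
  have hFclb2 : 1/(m-ℓ) - 1/(c-ℓ) ≤ 1/(b-c) + 1/(Δ-c) - 1/(c-a) - 1/(Δ+c) := by
    linarith [hRb, hLb, h0, hbr1]
  have k1 : (1/(u-c) - 1/(u-m)) * (x - c) ≤ ε :=
    (mul_le_mul_of_nonneg_right hFclb1 hxc0.le).trans hεFc
  have k2 : (1/(m-ℓ) - 1/(c-ℓ)) * (x - c) ≤ ε :=
    (mul_le_mul_of_nonneg_right hFclb2 hxc0.le).trans hεFc
  have e1 : 1/(u-c) - 1/(u-m) = (c-m)/((u-c)*(u-m)) := by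
    rw [div_sub_div _ _ huc.ne' hum.ne']
    congr 1 <;> ring
  have e2 : 1/(m-ℓ) - 1/(c-ℓ) = (c-m)/((c-ℓ)*(m-ℓ)) := by
    rw [div_sub_div _ _ hml.ne' hcl.ne']
    congr 1 <;> ring
  rw [e1] at k1
  rw [e2] at k2
  rw [div_mul_eq_mul_div, div_le_iff₀ (by positivity)] at k1
  rw [div_mul_eq_mul_div, div_le_iff₀ (by positivity)] at k2
  rw [hcm, hxc] at k1 k2
  have k1' : (x-m)^2 ≤ 4*ε*(u-m)^2 :=
    key13_sq (x-m) (u-c) (u-m) (u-m) ε k1 (by linarith) le_rfl huc.le hum.le hum hε0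
  have k2' : (x-m)^2 ≤ 4*ε*(x-ℓ)^2 :=
    key13_sq (x-m) (c-ℓ) (m-ℓ) (x-ℓ) ε k2 (by linarith) (by linarith) hcl.le hml.le hxl hε0
  have hεpos : 0 < ε := key13_pos (x-m) ((u-c)*(u-m)) ε k1 (by linarith) (mul_pos huc hum)
  have hdd : 0 < x - m := by linarith
  have hd2β : x - m ≤ 2*Real.sqrt ε*(u-m) := key13_sqrt (x-m) (u-m) ε hdd hum hε0 k1'
  have hd2A : x - m ≤ 2*Real.sqrt ε*(x-ℓ) := key13_sqrt (x-m) (x-ℓ) ε hdd hxl hε0 k2'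
  have hB1 : 1/(b-x) - 1/(b-m) ≤ (x-m)/((u-x)*(u-m)) := by
    have e : 1/(b-x) - 1/(b-m) = (x-m)/((b-x)*(b-m)) := by
      rw [div_sub_div _ _ px2.ne' pm2.ne']
      congr 1 <;> ring
    rw [e]
    exact div_le_div_of_nonneg_left (by linarith) (mul_pos hux hum)
      (mul_le_mul (by linarith) (by linarith) hum.le px2.le)
  have hB2 : 1/(Δ-x) - 1/(Δ-m) ≤ (x-m)/((u-x)*(u-m)) := by
    have e : 1/(Δ-x) - 1/(Δ-m) = (x-m)/((Δ-x)*(Δ-m)) := by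
      rw [div_sub_div _ _ px4.ne' pm4.ne']
      congr 1 <;> ring
    rw [e]
    exact div_le_div_of_nonneg_left (by linarith) (mul_pos hux hum)
      (mul_le_mul (by linarith) (by linarith) hum.le px4.le)
  have hB3 : 1/(m-a) - 1/(x-a) ≤ (x-m)/((x-ℓ)*(m-ℓ)) := by
    have e : 1/(m-a) - 1/(x-a) = (x-m)/((x-a)*(m-a)) := by
      rw [div_sub_div _ _ pm1.ne' px1.ne']
      congr 1 <;> ring
    rw [e]
    exact div_le_div_of_nonneg_left (by linarith) (mul_pos hxl hml)
      (mul_le_mul (by linarith) (by linarith) hml.le px1.le)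
  have hB4 : 1/(Δ+m) - 1/(Δ+x) ≤ (x-m)/((x-ℓ)*(m-ℓ)) := by
    have e : 1/(Δ+m) - 1/(Δ+x) = (x-m)/((Δ+x)*(Δ+m)) := by
      rw [div_sub_div _ _ pm3.ne' px3.ne']
      congr 1 <;> ring
    rw [e]
    exact div_le_div_of_nonneg_left (by linarith) (mul_pos hxl hml)
      (mul_le_mul (by linarith) (by linarith) hml.le px3.le)
  have hFxub : 1/(b-x) + 1/(Δ-x) - 1/(x-a) - 1/(Δ+x) ≤
      2*(x-m)/((u-x)*(u-m)) + 2*(x-m)/((x-ℓ)*(m-ℓ)) := by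
    have r1 : 2*(x-m)/((u-x)*(u-m)) = (x-m)/((u-x)*(u-m)) + (x-m)/((u-x)*(u-m)) := by ring
    have r2 : 2*(x-m)/((x-ℓ)*(m-ℓ)) = (x-m)/((x-ℓ)*(m-ℓ)) + (x-m)/((x-ℓ)*(m-ℓ)) := by ring
    linarith [hB1, hB2, hB3, hB4, h0]
  have hgoal : 2*(x-m)/((u-x)*(u-m)) + 2*(x-m)/((x-ℓ)*(m-ℓ)) ≤ 32*Real.sqrt ε/(u-ℓ) := by
    have := key13_endgame (m-ℓ) (u-m) (x-ℓ) (u-x) (x-m) (Real.sqrt ε)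
      hml hum (by ring) (by ring) hdd
      (Real.sqrt_pos.mpr hεpos) hba1 hba2
      (key13_s6 ε hε0 hε36) hd2β hd2A
    have e : u - ℓ = (m-ℓ) + (u-m) := by ring
    rw [e]
    exact this
  linarith [hFxub, hgoal]


set_option maxHeartbeats 1000000 in

/-- With `Γ_j` the component barrier functions on `(ℓ_j, u_j)`,
`δ = min_j (u_j - ℓ_j) > 0` and `ε = min{(δ·Δ/(2048·√n))², 1/36}`, if `x ∈ Ω` has
components satisfying `Γ_j(x_j) - min Γ_j ≤ ε` for every `j`, then
`‖∇Γ̂(x)‖₂ ≤ Δ/64` where `Γ̂ = Γ_LR + Γ_Δ`. -/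
theorem stmt_13 (n : ℕ) (hn : 0 < n)
    (xL xR : EuclideanSpace ℝ (Fin n)) (Δ : ℝ) (hΔ : 0 < Δ)
    (ℓ u : Fin n → ℝ)
    (hℓ : ∀ j, ℓ j = max (-Δ) (xL j)) (hu : ∀ j, u j = min Δ (xR j))
    (Γj : Fin n → ℝ → ℝ)
    (hΓj : ∀ j x, Γj j x = -Real.log (x - xL j) - Real.log (xR j - x)
      - Real.log (Δ + x) - Real.log (Δ - x))
    (δ ε : ℝ)
    (hδ : δ = ⨅ j, (u j - ℓ j)) (hδpos : 0 < δ)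
    (hε : ε = min ((δ * Δ / (2048 * Real.sqrt n)) ^ 2) (1 / 36))
    (Γhat : EuclideanSpace ℝ (Fin n) → ℝ)
    (hΓhat : ∀ y, Γhat y = (-∑ j, (Real.log (y j - xL j) + Real.log (xR j - y j)))
      + (-∑ j, (Real.log (Δ + y j) + Real.log (Δ - y j))))
    (x : EuclideanSpace ℝ (Fin n))
    (hx : ∀ j, ℓ j < x j ∧ x j < u j)
    (m : Fin n → ℝ)
    (hm : ∀ j, m j ∈ Set.Ioo (ℓ j) (u j) ∧ IsMinOn (Γj j) (Set.Ioo (ℓ j) (u j)) (m j))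
    (hxopt : ∀ j, Γj j (x j) - Γj j (m j) ≤ ε) :
    ‖gradient Γhat x‖ ≤ Δ / 64 := by
  haveI : Nonempty (Fin n) := Fin.pos_iff_nonempty.mp hn
  have hn' : (0:ℝ) < (n:ℝ) := by exact_mod_cast hn
  have hsn : 0 < Real.sqrt n := Real.sqrt_pos.mpr hn'
  have hε0 : 0 ≤ ε := by rw [hε]; positivity
  have hε36 : ε ≤ 1/36 := hε ▸ min_le_right _ _
  have hsqrtε : Real.sqrt ε ≤ δ * Δ / (2048 * Real.sqrt n) := by
    have h1 : ε ≤ (δ * Δ / (2048 * Real.sqrt n)) ^ 2 := hε ▸ min_le_left _ _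
    calc Real.sqrt ε ≤ Real.sqrt ((δ * Δ / (2048 * Real.sqrt n)) ^ 2) := Real.sqrt_le_sqrt h1
      _ = δ * Δ / (2048 * Real.sqrt n) := Real.sqrt_sq (by positivity)
  -- the componentwise derivative
  have hkey : ∀ j, |1/(xR j - x j) + 1/(Δ - x j) - 1/(x j - xL j) - 1/(Δ + x j)|
      ≤ Δ / (64 * Real.sqrt n) := by
    intro j
    obtain ⟨hmI, hmin⟩ := hm j
    obtain ⟨hx1, hx2⟩ := hx j
    have hδle : δ ≤ u j - ℓ j := by
      rw [hδ]
      exact ciInf_le (Set.Finite.bddBelow (Set.finite_range _)) j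
    have hlu : 0 < u j - ℓ j := by
      simp only [Set.mem_Ioo] at hmI
      linarith [hmI.1, hmI.2]
    have hbound : 32 * Real.sqrt ε / (u j - ℓ j) ≤ Δ / (64 * Real.sqrt n) := by
      have h2 : 32 * Real.sqrt ε / (u j - ℓ j) ≤ 32 * Real.sqrt ε / δ :=
        div_le_div_of_nonneg_left (by positivity) hδpos hδle
      have h3 : 32 * Real.sqrt ε / δ ≤ 32 * (δ * Δ / (2048 * Real.sqrt n)) / δ :=
        (div_le_div_iff_of_pos_right hδpos).mpr (by linarith [hsqrtε])
      have h4 : 32 * (δ * Δ / (2048 * Real.sqrt n)) / δ = Δ / (64 * Real.sqrt n) := by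
        field_simp
        ring
      linarith
    rcases le_or_gt (m j) (x j) with hmx | hxm
    · obtain ⟨h1, h2⟩ := key13 (xL j) (xR j) Δ (ℓ j) (u j) (m j) (x j) ε (Γj j)
        (hΓj j) (hℓ j) (hu j) hmI hmin ⟨hx1, hx2⟩ hmx (hxopt j) hε0 hε36
      rw [abs_of_nonneg h1]
      exact h2.trans hbound
    · have hmI' : -(m j) ∈ Set.Ioo (-(u j)) (-(ℓ j)) := by
        simp only [Set.mem_Ioo] at hmI ⊢
        exact ⟨by linarith [hmI.2], by linarith [hmI.1]⟩
      have hmin' : IsMinOn (fun t => Γj j (-t)) (Set.Ioo (-(u j)) (-(ℓ j))) (-(m j)) := by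
        rw [isMinOn_iff]
        intro t ht
        simp only [Set.mem_Ioo] at ht
        simp only [neg_neg]
        exact isMinOn_iff.mp hmin (-t) ⟨by linarith [ht.2], by linarith [ht.1]⟩
      obtain ⟨h1, h2⟩ := key13 (-(xR j)) (-(xL j)) Δ (-(u j)) (-(ℓ j)) (-(m j)) (-(x j)) ε
        (fun t => Γj j (-t))
        (by
          intro t
          show Γj j (-t) = _
          rw [hΓj]
          ring_nf)
        (by rw [hu j, ← max_neg_neg])
        (by rw [hℓ j, ← min_neg_neg, neg_neg])
        hmI' hmin'
        (by simp only [Set.mem_Ioo]; exact ⟨by linarith, by linarith⟩)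
        (by linarith)
        (by simp only [neg_neg]; exact hxopt j)
        hε0 hε36
      have e1 : -(xL j) - -(x j) = x j - xL j := by ring
      have e2 : Δ - -(x j) = Δ + x j := by ring
      have e3 : -(x j) - -(xR j) = xR j - x j := by ring
      have e4 : Δ + -(x j) = Δ - x j := by ring
      have he2 : -(ℓ j) - -(u j) = u j - ℓ j := by ring
      rw [e1, e2, e3, e4] at h1 h2
      rw [he2] at h2
      rw [abs_of_nonpos (by linarith)]
      linarith [h2, hbound]
  -- positivity of the barrier distances at x
  have hpos : ∀ j, 0 < x j - xL j ∧ 0 < xR j - x j ∧ 0 < Δ + x j ∧ 0 < Δ - x j := by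
    intro j
    have h1 := (hx j).1
    have h2 := (hx j).2
    have ha : xL j ≤ ℓ j := (hℓ j) ▸ le_max_right _ _
    have hb : -Δ ≤ ℓ j := (hℓ j) ▸ le_max_left _ _
    have hc : u j ≤ xR j := (hu j) ▸ min_le_right _ _
    have hd : u j ≤ Δ := (hu j) ▸ min_le_left _ _
    exact ⟨by linarith, by linarith, by linarith, by linarith⟩
  -- rewrite Γhat as a single sum
  have hΓ' : Γhat = fun y : EuclideanSpace ℝ (Fin n) => ∑ j,
      (-Real.log (y j - xL j) - Real.log (xR j - y j)
        - Real.log (Δ + y j) - Real.log (Δ - y j)) := by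
    funext y
    rw [hΓhat y, ← Finset.sum_neg_distrib, ← Finset.sum_neg_distrib, ← Finset.sum_add_distrib]
    exact Finset.sum_congr rfl (fun j _ => by ring)
  -- Fréchet derivative
  have hdf : HasFDerivAt Γhat (∑ j, (1/(xR j - x j) + 1/(Δ - x j) - 1/(x j - xL j) - 1/(Δ + x j))
      • (EuclideanSpace.proj j : EuclideanSpace ℝ (Fin n) →L[ℝ] ℝ)) x := by
    rw [hΓ']
    apply HasFDerivAt.fun_sum
    intro j _
    obtain ⟨p1, p2, p3, p4⟩ := hpos j
    have hb := hasDerivAt_barrier (xL j) (xR j) Δ (x j) p1 p2 p3 p4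
    have hp := (EuclideanSpace.proj j : EuclideanSpace ℝ (Fin n) →L[ℝ] ℝ).hasFDerivAt (x := x)
    exact hb.comp_hasFDerivAt x hp
  -- gradient
  have hgrad : HasGradientAt Γhat ((WithLp.equiv 2 (Fin n → ℝ)).symm
      (fun j => 1/(xR j - x j) + 1/(Δ - x j) - 1/(x j - xL j) - 1/(Δ + x j))) x := by
    rw [hasGradientAt_iff_hasFDerivAt]
    refine hdf.congr_fderiv ?_
    apply ContinuousLinearMap.ext
    intro v
    simp [InnerProductSpace.toDual_apply_apply, PiLp.inner_apply, ContinuousLinearMap.sum_apply,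
      PiLp.proj_apply, RCLike.inner_apply,
      Finset.mul_sum, mul_comm]
  rw [hgrad.gradient]
  -- norm bound
  have hΔ64 : (0:ℝ) ≤ Δ/64 := by positivity
  rw [EuclideanSpace.norm_eq]
  have hsum : ∑ j, ‖((WithLp.equiv 2 (Fin n → ℝ)).symm
      (fun j => 1/(xR j - x j) + 1/(Δ - x j) - 1/(x j - xL j) - 1/(Δ + x j))) j‖^2
      ≤ (Δ/64)^2 := by
    have hterm : ∀ j : Fin n, ‖((WithLp.equiv 2 (Fin n → ℝ)).symm
        (fun j => 1/(xR j - x j) + 1/(Δ - x j) - 1/(x j - xL j) - 1/(Δ + x j))) j‖^2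
        ≤ (Δ/(64*Real.sqrt n))^2 := by
      intro j
      rw [WithLp.equiv_symm_apply, PiLp.toLp_apply, Real.norm_eq_abs]
      exact pow_le_pow_left₀ (abs_nonneg _) (hkey j) 2
    calc ∑ j, ‖((WithLp.equiv 2 (Fin n → ℝ)).symm
        (fun j => 1/(xR j - x j) + 1/(Δ - x j) - 1/(x j - xL j) - 1/(Δ + x j))) j‖^2
        ≤ Finset.univ.card • (Δ/(64*Real.sqrt n))^2 :=
          Finset.sum_le_card_nsmul _ _ _ (fun j _ => hterm j)
      _ = (n:ℝ) * (Δ/(64*Real.sqrt n))^2 := by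
          rw [Finset.card_univ, Fintype.card_fin, nsmul_eq_mul]
      _ = (Δ/64)^2 := by
          rw [div_pow, mul_pow, Real.sq_sqrt hn'.le, div_pow]
          field_simp
  calc Real.sqrt (∑ j, ‖((WithLp.equiv 2 (Fin n → ℝ)).symm
      (fun j => 1/(xR j - x j) + 1/(Δ - x j) - 1/(x j - xL j) - 1/(Δ + x j))) j‖^2)
      ≤ Real.sqrt ((Δ/64)^2) := Real.sqrt_le_sqrt hsum
    _ = Δ/64 := Real.sqrt_sq hΔ64
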